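/- arXiv:1607.05277 — 3 statements merged into one kernel-verified Lean document; each statement's English description precedes it below -/
import Mathlib

section
/- Let N be a positive integer and X an invertible n×n complex matrix with X^N = 1. For any n×n complex matrix E, define A := (1/N) ∑_{k=0}^{N-1} ∑_{p=0}^{k} X^{-p} E X^{p}. Then X^{-1} A X − A = ⟨E⟩ − E, where ⟨E⟩ := (1/N) ∑_{k=0}^{N-1} X^{-k} E X^{k}. In particular, if ⟨E⟩ = 0 then X^{-1} A X − A = −E. -/
/-- For a positive integer `N`, an invertible `n × n` complex matrix `X` with
`X ^ N = 1`, and any matrix `E`, the matrix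
`A := (1/N) ∑_{k=0}^{N-1} ∑_{p=0}^{k} X⁻ᵖ E Xᵖ` satisfies the telescoping identity
`X⁻¹ A X - A = ⟨E⟩ - E`, where `⟨E⟩ := (1/N) ∑_{k=0}^{N-1} X⁻ᵏ E Xᵏ`.
In particular, if `⟨E⟩ = 0` then `X⁻¹ A X - A = -E`. -/
theorem stepOne_telescoping_identity
    (N n : ℕ) (hN : 0 < N)
    (X : Matrix (Fin n) (Fin n) ℂ) (hXunit : IsUnit X) (hXN : X ^ N = 1)
    (E : Matrix (Fin n) (Fin n) ℂ)
    (A : Matrix (Fin n) (Fin n) ℂ)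
    (hA : A = (N : ℂ)⁻¹ • ∑ k ∈ Finset.range N, ∑ p ∈ Finset.range (k + 1),
        X⁻¹ ^ p * E * X ^ p)
    (S : Matrix (Fin n) (Fin n) ℂ)
    (hS : S = (N : ℂ)⁻¹ • ∑ k ∈ Finset.range N, X⁻¹ ^ k * E * X ^ k) :
    X⁻¹ * A * X - A = S - E ∧ (S = 0 → X⁻¹ * A * X - A = -E) := by
  set f : ℕ → Matrix (Fin n) (Fin n) ℂ := fun p => X⁻¹ ^ p * E * X ^ p with hf
  have hf0 : f 0 = E := by simp [hf]
  have hdet : IsUnit X.det := (Matrix.isUnit_iff_isUnit_det X).mp hXunit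
  have hfN : f N = E := by
    have hc : (X⁻¹ * X) ^ N = X⁻¹ ^ N * X ^ N :=
      Commute.mul_pow ((Matrix.nonsing_inv_mul X hdet).trans
        (Matrix.mul_nonsing_inv X hdet).symm) N
    rw [Matrix.nonsing_inv_mul X hdet, one_pow, hXN, mul_one] at hc
    simp [hf, hXN, ← hc]
  have hstep : ∀ p, X⁻¹ * f p * X = f (p + 1) := by
    intro p
    simp only [hf, pow_succ X, pow_succ' X⁻¹, mul_assoc]
  have hA' : X⁻¹ * A * X
      = (N : ℂ)⁻¹ • ∑ k ∈ Finset.range N, ∑ p ∈ Finset.range (k + 1), f (p + 1) := by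
    rw [hA, Matrix.mul_smul, Matrix.smul_mul]
    congr 1
    rw [Finset.mul_sum, Finset.sum_mul]
    refine Finset.sum_congr rfl fun k _ => ?_
    rw [Finset.mul_sum, Finset.sum_mul]
    exact Finset.sum_congr rfl fun p _ => hstep p
  have hshift : ∑ k ∈ Finset.range N, f (k + 1) = ∑ k ∈ Finset.range N, f k := by
    have h1 := Finset.sum_range_succ' f N
    rw [Finset.sum_range_succ, hfN, hf0] at h1
    exact (add_right_cancel h1).symm
  have hNc : (N : ℂ) ≠ 0 := Nat.cast_ne_zero.mpr hN.ne'
  have main : X⁻¹ * A * X - A = S - E := by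
    rw [hA', hA, ← smul_sub, ← Finset.sum_sub_distrib]
    have : ∀ k ∈ Finset.range N,
        (∑ p ∈ Finset.range (k + 1), f (p + 1)) - ∑ p ∈ Finset.range (k + 1), f p
        = f (k + 1) - f 0 := by
      intro k _
      rw [← Finset.sum_sub_distrib, Finset.sum_range_sub]
    rw [Finset.sum_congr rfl this, Finset.sum_sub_distrib, hshift, Finset.sum_const,
      Finset.card_range, smul_sub, hf0, hS]
    congr 1
    rw [← Nat.cast_smul_eq_nsmul ℂ, smul_smul, inv_mul_cancel₀ hNc, one_smul]
  exact ⟨main, fun hS0 => by rw [main, hS0, zero_sub]⟩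
end

section
/- Let N be a positive integer, X an invertible n×n complex matrix with X^N = 1, and let D, E be n×n complex matrices with ⟨E⟩ := (1/N) ∑_{k=0}^{N-1} X^{-k} E X^{k} = 0. Set A := (1/N) ∑_{k=0}^{N-1} ∑_{p=0}^{k} X^{-p} E X^{p}. Let 0 < a < 1/2, and let V : ℝ → (n×n complex matrices) be integrable on [0,1] with ∫₀¹ V(t) dt = 0. Define H′ : [0,1] → (n×n complex matrices) by H′(t) = −(1/a)·A for 0 ≤ t < a, H′(t) = (1/(1−2a))·(D + E + V((t−a)/(1−2a))) for a ≤ t < 1−a, and H′(t) = (1/a)·X^{-1} A X for 1−a ≤ t ≤ 1. Then ∫₀¹ H′(t) dt = D. -/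
open scoped Matrix.Norms.L2Operator

open MeasureTheory

/-- "Step One": Let `X` be an invertible matrix with `X ^ N = 1`, let `E` have
vanishing symmetrization `⟨E⟩ = 0`, and let `A := (1/N) ∑_{k<N} ∑_{p≤k} X⁻ᵖ E Xᵖ`.
For `0 < a < 1/2` and `V` integrable on `[0,1]` with `∫₀¹ V = 0`, the piecewise Hamiltonian
`H′(t) = -(1/a)A` on `[0,a)`, `H′(t) = (1/(1-2a))(D + E + V((t-a)/(1-2a)))` on `[a, 1-a)`,
`H′(t) = (1/a) X⁻¹ A X` on `[1-a, 1]` has time average `∫₀¹ H′(t) dt = D`. -/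
theorem stepOne_time_average
    (N n : ℕ) (hN : 0 < N)
    (X : Matrix (Fin n) (Fin n) ℂ) (hXunit : IsUnit X) (hXN : X ^ N = 1)
    (D E : Matrix (Fin n) (Fin n) ℂ)
    (hE : (N : ℂ)⁻¹ • ∑ k ∈ Finset.range N, X⁻¹ ^ k * E * X ^ k = 0)
    (A : Matrix (Fin n) (Fin n) ℂ)
    (hA : A = (N : ℂ)⁻¹ • ∑ k ∈ Finset.range N, ∑ p ∈ Finset.range (k + 1),
        X⁻¹ ^ p * E * X ^ p)
    (a : ℝ) (ha : 0 < a) (ha' : a < 1 / 2)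
    (V : ℝ → Matrix (Fin n) (Fin n) ℂ)
    (hV : IntervalIntegrable V volume 0 1)
    (hVavg : ∫ t in (0:ℝ)..1, V t = 0)
    (H' : ℝ → Matrix (Fin n) (Fin n) ℂ)
    (hH' : ∀ t ∈ Set.Icc (0:ℝ) 1,
        H' t = if t < a then a⁻¹ • (-A)
          else if t < 1 - a then (1 - 2 * a)⁻¹ • (D + E + V ((t - a) / (1 - 2 * a)))
          else a⁻¹ • (X⁻¹ * A * X)) :
    ∫ t in (0:ℝ)..1, H' t = D := by
  -- Part 1: the algebraic identity  X⁻¹ * A * X = A - E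
  have hNC : (N : ℂ) ≠ 0 := Nat.cast_ne_zero.mpr hN.ne'
  set g : ℕ → Matrix (Fin n) (Fin n) ℂ := fun p => X⁻¹ ^ p * E * X ^ p with hg
  have hXinv : X⁻¹ = X ^ (N - 1) := by
    apply Matrix.inv_eq_right_inv
    rw [← pow_succ', Nat.sub_add_cancel hN, hXN]
  have hgN : g N = E := by
    have h1 : X⁻¹ ^ N = 1 := by
      rw [hXinv, ← pow_mul, mul_comm, pow_mul, hXN, one_pow]
    simp [hg, h1, hXN]
  have hgsum : ∑ k ∈ Finset.range N, g k = 0 := by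
    have := hE
    rwa [smul_eq_zero_iff_right (inv_ne_zero hNC)] at this
  have key : X⁻¹ * A * X = A - E := by
    have hconj : X⁻¹ * A * X = (N : ℂ)⁻¹ • ∑ k ∈ Finset.range N,
        ∑ p ∈ Finset.range (k + 1), g (p + 1) := by
      rw [hA, Matrix.mul_smul, Matrix.smul_mul]
      congr 1
      rw [Finset.mul_sum, Finset.sum_mul]
      refine Finset.sum_congr rfl fun k _ => ?_
      rw [Finset.mul_sum, Finset.sum_mul]
      refine Finset.sum_congr rfl fun p _ => ?_
      show X⁻¹ * g p * X = g (p + 1)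
      simp only [hg]
      rw [pow_succ X, pow_succ' X⁻¹]
      simp only [mul_assoc]
    have htel : A - X⁻¹ * A * X = (N : ℂ)⁻¹ • ∑ k ∈ Finset.range N,
        (g 0 - g (k + 1)) := by
      rw [hconj, hA, ← smul_sub, ← Finset.sum_sub_distrib]
      congr 1
      refine Finset.sum_congr rfl fun k _ => ?_
      rw [← Finset.sum_sub_distrib]
      exact Finset.sum_range_sub' g (k + 1)
    have hshift : ∑ k ∈ Finset.range N, g (k + 1) = 0 := by
      have h1 : ∑ k ∈ Finset.range (N + 1), g k
          = ∑ k ∈ Finset.range N, g (k + 1) + g 0 := Finset.sum_range_succ' g N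
      have h2 : ∑ k ∈ Finset.range (N + 1), g k
          = ∑ k ∈ Finset.range N, g k + g N := Finset.sum_range_succ g N
      have hg0 : g 0 = E := by simp [hg]
      rw [h2, hgsum, hgN, zero_add, hg0] at h1
      linear_combination (norm := abel) h1.symm
    rw [Finset.sum_sub_distrib, hshift, sub_zero, Finset.sum_const,
      Finset.card_range] at htel
    have hg0 : g 0 = E := by simp [hg]
    rw [hg0, ← Nat.cast_smul_eq_nsmul ℂ, smul_smul, inv_mul_cancel₀ hNC,
      one_smul] at htel
    linear_combination (norm := abel) -htel
  -- Part 2: the integral computation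
  set b : ℝ := 1 - 2 * a with hb
  have hbpos : 0 < b := by simp [hb]; linarith
  have hbne : b ≠ 0 := hbpos.ne'
  have hale : a ≤ 1 - a := by linarith
  set c₁ : Matrix (Fin n) (Fin n) ℂ := a⁻¹ • (-A) with hc₁
  set c₂ : Matrix (Fin n) (Fin n) ℂ := a⁻¹ • (X⁻¹ * A * X) with hc₂
  set f : ℝ → Matrix (Fin n) (Fin n) ℂ := fun t =>
    if t < a then c₁
    else if t < 1 - a then b⁻¹ • (D + E + V ((t - a) / b))
    else c₂ with hf
  have hcongr : ∫ t in (0:ℝ)..1, H' t = ∫ t in (0:ℝ)..1, f t := by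
    apply intervalIntegral.integral_congr
    intro t ht
    rw [Set.uIcc_of_le (by norm_num : (0:ℝ) ≤ 1)] at ht
    exact hH' t ht
  -- ae equalities on pieces
  have hae1 : ∀ᵐ t ∂volume, t ∈ Set.uIoc (0:ℝ) a → f t = c₁ := by
    filter_upwards [(show (volume : Measure ℝ) {a} = 0 from measure_singleton a)
      |> fun h => (ae_iff.mpr (by simpa using h) : ∀ᵐ t : ℝ ∂volume, t ≠ a)]
      with t hta ht
    rw [Set.uIoc_of_le ha.le] at ht
    have : t < a := lt_of_le_of_ne ht.2 hta
    simp [hf, this]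
  have hae2 : ∀ᵐ t ∂volume, t ∈ Set.uIoc a (1 - a) →
      f t = b⁻¹ • (D + E + V ((t - a) / b)) := by
    filter_upwards [(show (volume : Measure ℝ) {1 - a} = 0 from measure_singleton _)
      |> fun h => (ae_iff.mpr (by simpa using h) : ∀ᵐ t : ℝ ∂volume, t ≠ 1 - a)]
      with t hta ht
    rw [Set.uIoc_of_le hale] at ht
    have h1 : ¬ t < a := not_lt.mpr ht.1.le
    have h2 : t < 1 - a := lt_of_le_of_ne ht.2 hta
    simp [hf, h1, h2]
  have hae3 : ∀ᵐ t ∂volume, t ∈ Set.uIoc (1 - a) 1 → f t = c₂ := by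
    refine Filter.Eventually.of_forall fun t ht => ?_
    rw [Set.uIoc_of_le (by linarith)] at ht
    have h1 : ¬ t < a := not_lt.mpr (by linarith [ht.1])
    have h2 : ¬ t < 1 - a := not_lt.mpr ht.1.le
    simp [hf, h1, h2]
  -- integrability of the middle substitution
  have hVsub : IntervalIntegrable (fun t => V ((t - a) / b)) volume a (1 - a) := by
    have h1 : IntervalIntegrable (fun x => V (x * b⁻¹)) volume 0 b := by
      have := hV.comp_mul_right (c := b⁻¹)
      simpa [div_eq_mul_inv, hbne] using this
    have h2 := h1.comp_sub_right a
    have he : b + a = 1 - a := by rw [hb]; ring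
    simpa [div_eq_mul_inv, he] using h2
  have hVval : ∫ t in a..(1 - a), V ((t - a) / b) = 0 := by
    have := intervalIntegral.integral_comp_div_sub V (a := a) (b := 1 - a)
      (c := b) hbne (a / b)
    have harg : ∀ t : ℝ, (t - a) / b = t / b - a / b := fun t => sub_div _ _ _
    simp only [harg]
    rw [this]
    have e1 : a / b - a / b = (0 : ℝ) := by ring
    have e2 : (1 - a) / b - a / b = (1 : ℝ) := by field_simp; ring
    rw [e1, e2, hVavg, smul_zero]
  have hi2 : IntervalIntegrable f volume a (1 - a) := by
    have hmid : IntervalIntegrable (fun t => b⁻¹ • (D + E + V ((t - a) / b)))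
        volume a (1 - a) := by
      exact ((intervalIntegrable_const (c := D + E)).add hVsub).smul b⁻¹
    exact hmid.congr_ae (Filter.EventuallyEq.symm
      ((ae_restrict_iff' measurableSet_uIoc).mpr hae2))
  have hi1 : IntervalIntegrable f volume 0 a :=
    (intervalIntegrable_const (c := c₁)).congr_ae (Filter.EventuallyEq.symm
      ((ae_restrict_iff' measurableSet_uIoc).mpr hae1))
  have hi3 : IntervalIntegrable f volume (1 - a) 1 :=
    (intervalIntegrable_const (c := c₂)).congr_ae (Filter.EventuallyEq.symm
      ((ae_restrict_iff' measurableSet_uIoc).mpr hae3))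
  -- values of the three pieces
  have hI1 : ∫ t in (0:ℝ)..a, f t = -A := by
    rw [intervalIntegral.integral_congr_ae hae1, intervalIntegral.integral_const,
      sub_zero, hc₁, smul_smul, mul_inv_cancel₀ ha.ne', one_smul]
  have hI3 : ∫ t in (1 - a)..1, f t = X⁻¹ * A * X := by
    rw [intervalIntegral.integral_congr_ae hae3, intervalIntegral.integral_const,
      hc₂, show (1 : ℝ) - (1 - a) = a by ring, smul_smul,
      mul_inv_cancel₀ ha.ne', one_smul]
  have hI2 : ∫ t in a..(1 - a), f t = D + E := by
    rw [intervalIntegral.integral_congr_ae hae2]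
    rw [intervalIntegral.integral_smul]
    have hsplit : ∫ t in a..(1 - a), (D + E + V ((t - a) / b))
        = (∫ _t in a..(1 - a), (D + E : Matrix (Fin n) (Fin n) ℂ))
          + ∫ t in a..(1 - a), V ((t - a) / b) := by
      exact intervalIntegral.integral_add intervalIntegrable_const hVsub
    rw [hsplit, hVval, add_zero, intervalIntegral.integral_const,
      show (1 : ℝ) - a - a = b by rw [hb]; ring, smul_smul,
      inv_mul_cancel₀ hbne, one_smul]
  -- assemble
  have hsplit1 : ∫ t in (0:ℝ)..(1 - a), f t
      = (∫ t in (0:ℝ)..a, f t) + ∫ t in a..(1 - a), f t :=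
    (intervalIntegral.integral_add_adjacent_intervals hi1 hi2).symm
  have hsplit2 : ∫ t in (0:ℝ)..1, f t
      = (∫ t in (0:ℝ)..(1 - a), f t) + ∫ t in (1 - a)..1, f t :=
    (intervalIntegral.integral_add_adjacent_intervals (hi1.trans hi2) hi3).symm
  rw [hcongr, hsplit2, hsplit1, hI1, hI2, hI3, key]
  abel
end

section
/- Let X, D, σ be n×n complex matrices with X² = 1, X·D = D·X, and exp(−iTD)·σ·exp(iTD) = σ for a real number T. Let t be a real number and set ρ := t·σ + (1−t)·X·σ·X. If the Floquet operator Ũ := X·exp(−iTD) satisfies Ũ·ρ·Ũ⁻¹ = ρ and σ ≠ X·σ·X, then t = 1/2. -/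
/-- Let `X, D, σ` be matrices with `X² = 1`, `XD = DX`, and
`exp(-iTD) σ exp(iTD) = σ`.  If `ρ := t σ + (1-t) X σ X` is a steady state of the Floquet
operator `Ũ := X exp(-iTD)`, i.e. `Ũ ρ Ũ⁻¹ = ρ`, and `σ ≠ X σ X`, then `t = 1/2`. -/
theorem floquet_steady_state_is_symmetric_mixture
    (n : ℕ) (X D σ : Matrix (Fin n) (Fin n) ℂ)
    (hX2 : X ^ 2 = 1)
    (hXD : X * D = D * X)
    (T : ℝ)
    (hσ : NormedSpace.exp ((-(Complex.I * (T : ℂ))) • D) * σ *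
        NormedSpace.exp ((Complex.I * (T : ℂ)) • D) = σ)
    (t : ℝ)
    (ρ : Matrix (Fin n) (Fin n) ℂ)
    (hρ : ρ = (t : ℂ) • σ + ((1 : ℂ) - (t : ℂ)) • (X * σ * X))
    (hsteady : (X * NormedSpace.exp ((-(Complex.I * (T : ℂ))) • D)) * ρ *
        (X * NormedSpace.exp ((-(Complex.I * (T : ℂ))) • D))⁻¹ = ρ)
    (hSB : σ ≠ X * σ * X) :
    t = 1 / 2 := by
  set E := NormedSpace.exp ((-(Complex.I * (T : ℂ))) • D) with hE
  set F := NormedSpace.exp ((Complex.I * (T : ℂ)) • D) with hF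
  have hXX : X * X = 1 := by rw [← pow_two]; exact hX2
  have hEF : E * F = 1 := by
    rw [hE, hF, ← Matrix.exp_add_of_commute _ _ ((Commute.refl D).smul_left _ |>.smul_right _)]
    rw [show (-(Complex.I * (T : ℂ))) • D + (Complex.I * (T : ℂ)) • D = 0 by
      rw [neg_smul, neg_add_cancel]]
    exact NormedSpace.exp_zero
  -- X commutes with E and F
  have hXDc : Commute X D := hXD
  have hXE : X * E = E * X := (hXDc.smul_right _).exp_right
  have hXF : X * F = F * X := (hXDc.smul_right _).exp_right
  -- the inverse of X * E is F * X
  have hinv : (X * E)⁻¹ = F * X := by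
    apply Matrix.inv_eq_right_inv
    calc X * E * (F * X) = X * (E * F) * X := by noncomm_ring
    _ = 1 := by rw [hEF, mul_one, hXX]
  rw [hinv, hρ] at hsteady
  -- conjugation of σ gives X σ X
  have hconj1 : X * E * σ * (F * X) = X * σ * X := by
    calc X * E * σ * (F * X) = X * (E * σ * F) * X := by noncomm_ring
    _ = X * σ * X := by rw [hσ]
  -- conjugation of X σ X gives σ
  have hconj2 : X * E * (X * σ * X) * (F * X) = σ := by
    calc X * E * (X * σ * X) * (F * X)
        = X * ((E * X) * σ * (X * F)) * X := by noncomm_ring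
      _ = X * ((X * E) * σ * (F * X)) * X := by rw [hXE, hXF]
      _ = (X * X) * (E * σ * F) * (X * X) := by noncomm_ring
      _ = σ := by rw [hσ, hXX, one_mul, mul_one]
  -- rewrite the steady-state equation
  have key : (t : ℂ) • (X * σ * X) + ((1 : ℂ) - (t : ℂ)) • σ
      = (t : ℂ) • σ + ((1 : ℂ) - (t : ℂ)) • (X * σ * X) := by
    calc (t : ℂ) • (X * σ * X) + ((1 : ℂ) - (t : ℂ)) • σ
        = X * E * ((t : ℂ) • σ + ((1 : ℂ) - (t : ℂ)) • (X * σ * X)) * (F * X) := by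
          rw [mul_add, add_mul, Matrix.mul_smul, Matrix.mul_smul, Matrix.smul_mul,
            Matrix.smul_mul, hconj1, hconj2]
      _ = (t : ℂ) • σ + ((1 : ℂ) - (t : ℂ)) • (X * σ * X) := hsteady
  have hzero : ((t : ℂ) • σ + ((1 : ℂ) - (t : ℂ)) • (X * σ * X))
      - ((t : ℂ) • (X * σ * X) + ((1 : ℂ) - (t : ℂ)) • σ) = 0 := sub_eq_zero.mpr key.symm
  have h2 : ((2 * (t : ℂ)) - 1) • (σ - X * σ * X) = 0 := by
    calc ((2 * (t : ℂ)) - 1) • (σ - X * σ * X)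
        = ((t : ℂ) • σ + ((1 : ℂ) - (t : ℂ)) • (X * σ * X))
          - ((t : ℂ) • (X * σ * X) + ((1 : ℂ) - (t : ℂ)) • σ) := by module
      _ = 0 := hzero
  have hne : σ - X * σ * X ≠ 0 := sub_ne_zero.mpr hSB
  have hsc : (2 * (t : ℂ)) - 1 = 0 := by
    rcases smul_eq_zero.mp h2 with h | h
    · exact h
    · exact absurd h hne
  have ht : (2 * t : ℝ) - 1 = 0 := by exact_mod_cast hsc
  linarith
end
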